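/- Nested Gronwall inequality: Let a ≤ b be real numbers and let y, f, g, h : [a,b] → [0,∞) be continuous functions with f nondecreasing. Suppose that y(s) ≤ f(s) + ∫_a^s h(t)·( y(t) + ∫_a^t g(τ)·y(τ) dτ ) dt for all s ∈ [a,b]. Then for all s ∈ [a,b]: (a) y(s) ≤ f(s)·( 1 + ∫_a^s h(t)·exp(∫_a^t (h(τ)+g(τ)) dτ) dt ), and (b) y(s) ≤ f(s)·exp(∫_a^s (h(t)+g(t)) dt). In particular, if f is identically 0 then y is identically 0 on [a,b]. -/

import Mathlib

open intervalIntegral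

section aux

lemma prim_cont (a b : ℝ) (hab : a ≤ b) (φ : ℝ → ℝ) (hφ : ContinuousOn φ (Set.Icc a b)) :
    ContinuousOn (fun x => ∫ t in a..x, φ t) (Set.Icc a b) := by
  have h1 : Set.uIcc a b = Set.Icc a b := Set.uIcc_of_le hab
  have := intervalIntegral.continuousOn_primitive_interval
    (f := φ) (a := a) (b := b) (μ := MeasureTheory.volume)
    (by rw [h1]; exact hφ.integrableOn_Icc)
  rwa [h1] at this

lemma prim_hasDerivAt (a b : ℝ) (φ : ℝ → ℝ) (hφ : ContinuousOn φ (Set.Icc a b))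
    {x : ℝ} (hx : x ∈ Set.Ioo a b) :
    HasDerivAt (fun s => ∫ t in a..s, φ t) (φ x) x := by
  have hmem : Set.Icc a b ∈ nhds x := Icc_mem_nhds hx.1 hx.2
  refine intervalIntegral.integral_hasDerivAt_right ?_ ?_ (hφ.continuousAt hmem)
  · refine (hφ.mono ?_).intervalIntegrable
    rw [Set.uIcc_of_le hx.1.le]
    exact Set.Icc_subset_Icc_right hx.2.le
  · exact AEStronglyMeasurable.stronglyMeasurableAtFilter_of_mem
      (hφ.aestronglyMeasurable measurableSet_Icc) hmem

lemma integrable_of_cont (a b : ℝ) (φ : ℝ → ℝ) (hφ : ContinuousOn φ (Set.Icc a b))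
    {s : ℝ} (hs : s ∈ Set.Icc a b) : IntervalIntegrable φ MeasureTheory.volume a s := by
  refine (hφ.mono ?_).intervalIntegrable
  rw [Set.uIcc_of_le hs.1]
  exact Set.Icc_subset_Icc_right hs.2

lemma gronwall_aux (a b : ℝ) (hab : a ≤ b) (u K : ℝ → ℝ)
    (hu : ContinuousOn u (Set.Icc a b)) (hK : ContinuousOn K (Set.Icc a b))
    (hK0 : ∀ t ∈ Set.Icc a b, 0 ≤ K t) (C : ℝ)
    (hineq : ∀ s ∈ Set.Icc a b, u s ≤ C + ∫ t in a..s, K t * u t) :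
    ∀ s ∈ Set.Icc a b, u s ≤ C * Real.exp (∫ t in a..s, K t) := by
  set P : ℝ → ℝ := fun s => ∫ t in a..s, K t with hP
  set V : ℝ → ℝ := fun s => C + ∫ t in a..s, K t * u t with hV
  set W : ℝ → ℝ := fun s => V s * Real.exp (-P s) with hW
  have hKu : ContinuousOn (fun t => K t * u t) (Set.Icc a b) := hK.mul hu
  have hPc : ContinuousOn P (Set.Icc a b) := prim_cont a b hab K hK
  have hVc : ContinuousOn V (Set.Icc a b) :=
    continuousOn_const.add (prim_cont a b hab _ hKu)
  have hWc : ContinuousOn W (Set.Icc a b) :=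
    hVc.mul (Real.continuous_exp.comp_continuousOn hPc.neg)
  have hWd : ∀ x ∈ Set.Ioo a b, HasDerivAt W
      (K x * u x * Real.exp (-P x) + V x * (Real.exp (-P x) * -K x)) x := by
    intro x hx
    have h1 : HasDerivAt V (K x * u x) x :=
      (prim_hasDerivAt a b _ hKu hx).const_add C
    have h2 : HasDerivAt P (K x) x := prim_hasDerivAt a b _ hK hx
    have h3 : HasDerivAt (fun s => Real.exp (-P s)) (Real.exp (-P x) * -K x) x :=
      h2.neg.exp
    exact h1.mul h3
  have hanti : AntitoneOn W (Set.Icc a b) := by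
    apply antitoneOn_of_deriv_nonpos (convex_Icc a b) hWc
    · intro x hx
      rw [interior_Icc] at hx
      exact ((hWd x hx).differentiableAt).differentiableWithinAt
    · intro x hx
      rw [interior_Icc] at hx
      rw [(hWd x hx).deriv]
      have hxI : x ∈ Set.Icc a b := Set.Ioo_subset_Icc_self hx
      have h1 : u x ≤ V x := hineq x hxI
      have h2 : 0 ≤ K x := hK0 x hxI
      have h3 : 0 < Real.exp (-P x) := Real.exp_pos _
      nlinarith [mul_nonneg (mul_nonneg h2 (sub_nonneg.2 h1)) h3.le]
  intro s hs
  have hWs : W s ≤ W a := hanti (Set.left_mem_Icc.2 hab) hs hs.1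
  have hWa : W a = C := by
    simp [hW, hV, hP, intervalIntegral.integral_same]
  rw [hWa] at hWs
  have h4 : 0 < Real.exp (-P s) := Real.exp_pos _
  have h5 : V s ≤ C * Real.exp (P s) := by
    have := mul_le_mul_of_nonneg_right hWs (le_of_lt (Real.exp_pos (P s)))
    rwa [hW, mul_assoc, ← Real.exp_add, neg_add_cancel, Real.exp_zero, mul_one] at this
  exact le_trans (hineq s hs) h5

end aux

/-- Nested Gronwall inequality on `[a, b] ⊆ ℝ`: if
`y s ≤ f s + ∫_a^s h t * (y t + ∫_a^t g τ * y τ dτ) dt` with `y, f, g, h` continuous and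
nonnegative on `[a, b]` and `f` nondecreasing, then
(a) `y s ≤ f s * (1 + ∫_a^s h t * exp (∫_a^t (h + g)) dt)`,
(b) `y s ≤ f s * exp (∫_a^s (h + g))`, and in particular `f ≡ 0` implies `y ≡ 0`. -/
theorem nested_gronwall (a b : ℝ) (hab : a ≤ b)
    (y f g h : ℝ → ℝ)
    (hy : ContinuousOn y (Set.Icc a b)) (hf : ContinuousOn f (Set.Icc a b))
    (hg : ContinuousOn g (Set.Icc a b)) (hh : ContinuousOn h (Set.Icc a b))
    (hy0 : ∀ s ∈ Set.Icc a b, 0 ≤ y s) (hf0 : ∀ s ∈ Set.Icc a b, 0 ≤ f s)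
    (hg0 : ∀ s ∈ Set.Icc a b, 0 ≤ g s) (hh0 : ∀ s ∈ Set.Icc a b, 0 ≤ h s)
    (hfmono : MonotoneOn f (Set.Icc a b))
    (hineq : ∀ s ∈ Set.Icc a b,
      y s ≤ f s + ∫ t in a..s, h t * (y t + ∫ τ in a..t, g τ * y τ)) :
    (∀ s ∈ Set.Icc a b,
      y s ≤ f s * (1 + ∫ t in a..s, h t * Real.exp (∫ τ in a..t, (h τ + g τ)))) ∧
    (∀ s ∈ Set.Icc a b,
      y s ≤ f s * Real.exp (∫ t in a..s, (h t + g t))) ∧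
    ((∀ s ∈ Set.Icc a b, f s = 0) → ∀ s ∈ Set.Icc a b, y s = 0) := by
  set u : ℝ → ℝ := fun t => y t + ∫ τ in a..t, g τ * y τ with hu_def
  have hgy : ContinuousOn (fun t => g t * y t) (Set.Icc a b) := hg.mul hy
  have hucont : ContinuousOn u (Set.Icc a b) := hy.add (prim_cont a b hab _ hgy)
  have hyu : ∀ t ∈ Set.Icc a b, y t ≤ u t := by
    intro t ht
    have : (0:ℝ) ≤ ∫ τ in a..t, g τ * y τ := by
      apply intervalIntegral.integral_nonneg ht.1
      intro τ hτ
      have hτI : τ ∈ Set.Icc a b := ⟨hτ.1, le_trans hτ.2 ht.2⟩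
      exact mul_nonneg (hg0 τ hτI) (hy0 τ hτI)
    simp only [hu_def]; linarith
  have hu0 : ∀ t ∈ Set.Icc a b, 0 ≤ u t := fun t ht => le_trans (hy0 t ht) (hyu t ht)
  have hhu : ContinuousOn (fun t => h t * u t) (Set.Icc a b) := hh.mul hucont
  have hK : ContinuousOn (fun t => h t + g t) (Set.Icc a b) := hh.add hg
  have hK0 : ∀ t ∈ Set.Icc a b, 0 ≤ h t + g t :=
    fun t ht => add_nonneg (hh0 t ht) (hg0 t ht)
  have hKu : ContinuousOn (fun t => (h t + g t) * u t) (Set.Icc a b) := hK.mul hucont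
  -- key estimate (b)
  have key : ∀ s ∈ Set.Icc a b, u s ≤ f s * Real.exp (∫ t in a..s, (h t + g t)) := by
    intro s₀ hs₀
    have hsub : Set.Icc a s₀ ⊆ Set.Icc a b := Set.Icc_subset_Icc_right hs₀.2
    have hineq' : ∀ s ∈ Set.Icc a s₀,
        u s ≤ f s₀ + ∫ t in a..s, (h t + g t) * u t := by
      intro s hs
      have hsI : s ∈ Set.Icc a b := hsub hs
      have h1 : y s ≤ f s + ∫ t in a..s, h t * u t := hineq s hsI
      have h2 : (∫ t in a..s, h t * u t) + (∫ t in a..s, g t * y t)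
          ≤ ∫ t in a..s, (h t + g t) * u t := by
        rw [← intervalIntegral.integral_add (integrable_of_cont a b _ hhu hsI)
          (integrable_of_cont a b _ hgy hsI)]
        apply intervalIntegral.integral_mono_on hsI.1
          ((integrable_of_cont a b _ hhu hsI).add (integrable_of_cont a b _ hgy hsI))
          (integrable_of_cont a b _ hKu hsI)
        intro t ht
        have htI : t ∈ Set.Icc a b := ⟨ht.1, le_trans ht.2 hsI.2⟩
        have := hyu t htI
        have := hg0 t htI
        have := hh0 t htI
        nlinarith
      have h3 : f s ≤ f s₀ := hfmono hsI hs₀ hs.2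
      have : u s = y s + ∫ t in a..s, g t * y t := rfl
      linarith
    have := gronwall_aux a s₀ hs₀.1 u (fun t => h t + g t)
      (hucont.mono hsub) (hK.mono hsub) (fun t ht => hK0 t (hsub ht)) (f s₀) hineq'
      s₀ (Set.right_mem_Icc.2 hs₀.1)
    exact this
  have hb : ∀ s ∈ Set.Icc a b, y s ≤ f s * Real.exp (∫ t in a..s, (h t + g t)) :=
    fun s hs => le_trans (hyu s hs) (key s hs)
  refine ⟨?_, hb, ?_⟩
  · -- part (a)
    intro s hs
    have hE : ContinuousOn (fun t => h t * Real.exp (∫ τ in a..t, (h τ + g τ)))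
        (Set.Icc a b) :=
      hh.mul (Real.continuous_exp.comp_continuousOn (prim_cont a b hab _ hK))
    have h1 : y s ≤ f s + ∫ t in a..s, h t * u t := hineq s hs
    have h2 : (∫ t in a..s, h t * u t)
        ≤ ∫ t in a..s, f s * (h t * Real.exp (∫ τ in a..t, (h τ + g τ))) := by
      apply intervalIntegral.integral_mono_on hs.1
        (integrable_of_cont a b _ hhu hs)
        (integrable_of_cont a b _ (continuousOn_const.mul hE) hs)
      intro t ht
      have htI : t ∈ Set.Icc a b := ⟨ht.1, le_trans ht.2 hs.2⟩
      have h3 : u t ≤ f t * Real.exp (∫ τ in a..t, (h τ + g τ)) := key t htI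
      have h4 : f t ≤ f s := hfmono htI hs ht.2
      have h5 : 0 < Real.exp (∫ τ in a..t, (h τ + g τ)) := Real.exp_pos _
      have h6 : 0 ≤ h t := hh0 t htI
      calc h t * u t ≤ h t * (f s * Real.exp (∫ τ in a..t, (h τ + g τ))) := by
            apply mul_le_mul_of_nonneg_left _ h6
            exact h3.trans (mul_le_mul_of_nonneg_right h4 h5.le)
        _ = f s * (h t * Real.exp (∫ τ in a..t, (h τ + g τ))) := by ring
    rw [intervalIntegral.integral_const_mul] at h2
    have := hyu s hs
    ring_nf
    nlinarith
  · -- part (c)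
    intro hfz s hs
    have h1 := hb s hs
    rw [hfz s hs, zero_mul] at h1
    exact le_antisymm h1 (hy0 s hs)
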